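/- For every r ≥ 3, the complement of the cycle C_{2r-1} is uniquely K_r-saturated: it contains no K_r, and adding any edge of the cycle to its complement creates exactly one copy of K_r. -/

import Mathlib

/-- `G` is uniquely `K_r`-saturated: it has no `r`-clique, and for each non-adjacent pair
`u ≠ v`, the graph obtained by adding the edge `uv` has exactly one `r`-clique. -/
def SimpleGraph.UniquelyKSat {V : Type*} (G : SimpleGraph V) (r : ℕ) : Prop :=
  G.CliqueFree r ∧ ∀ u v : V, u ≠ v → ¬ G.Adj u v →
    ∃! s : Finset V, (G ⊔ SimpleGraph.fromEdgeSet {s(u, v)}).IsNClique r s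

/-- The complement of the cycle on `m` vertices: `i` adjacent to `j` iff `i ≠ j` and
`i - j ≢ ±1 (mod m)`. -/
def cycleComplement (m : ℕ) : SimpleGraph (ZMod m) where
  Adj i j := i ≠ j ∧ i - j ≠ 1 ∧ j - i ≠ 1
  symm := ⟨fun _ _ h => ⟨h.1.symm, h.2.2, h.2.1⟩⟩
  loopless := ⟨fun _ h => h.1 rfl⟩

private lemma zmod_cast_inj {m a b : ℕ} (ha : a < m) (hb : b < m)
    (h : (a : ZMod m) = b) : a = b := by
  have h2 := (ZMod.natCast_eq_natCast_iff a b m).mp h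
  rwa [Nat.ModEq, Nat.mod_eq_of_lt ha, Nat.mod_eq_of_lt hb] at h2

private lemma zmod_cast_neg_one {m : ℕ} (hm : 1 ≤ m) : ((m - 1 : ℕ) : ZMod m) = -1 := by
  have h : ((m - 1 : ℕ) : ZMod m) + 1 = 0 := by
    have h2 : ((m - 1 + 1 : ℕ) : ZMod m) = 0 := by
      rw [show m - 1 + 1 = m by omega, ZMod.natCast_self]
    rw [Nat.cast_add, Nat.cast_one] at h2
    exact h2
  exact eq_neg_of_add_eq_zero_left h

private lemma cc_cliquefree (r : ℕ) (hr : 3 ≤ r) :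
    (cycleComplement (2*r-1)).CliqueFree r := by
  intro s hs
  haveI : NeZero (2*r-1) := ⟨by omega⟩
  haveI : Fact (1 < 2*r-1) := ⟨by omega⟩
  set t := s.image (· + 1) with htdef
  have htc : t.card = r := by
    rw [htdef, Finset.card_image_of_injective _ (add_left_injective 1), hs.2]
  have hd : Disjoint s t := by
    rw [Finset.disjoint_right]
    intro x hx hxs
    rw [htdef, Finset.mem_image] at hx
    obtain ⟨y, hy, hyx⟩ := hx
    have hne : y ≠ x := by
      intro h
      exact one_ne_zero (add_eq_left.mp (hyx.trans h.symm))
    have hadj := hs.1 (Finset.mem_coe.mpr hy) (Finset.mem_coe.mpr hxs) hne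
    exact hadj.2.2 (by rw [← hyx]; ring)
  have hle := Finset.card_le_univ (s ∪ t)
  rw [Finset.card_union_of_disjoint hd, hs.2, htc] at hle
  rw [ZMod.card] at hle
  omega

private lemma cc_key (r : ℕ) (hr : 3 ≤ r) (u : ZMod (2*r-1)) :
    ∃! s : Finset (ZMod (2*r-1)),
      (cycleComplement (2*r-1) ⊔ SimpleGraph.fromEdgeSet {s(u, u+1)}).IsNClique r s := by
  haveI : NeZero (2*r-1) := ⟨by omega⟩
  haveI : Fact (1 < 2*r-1) := ⟨by omega⟩
  set f : ℕ → ZMod (2*r-1) := fun k => u + 1 + ((2*k : ℕ) : ZMod (2*r-1)) with hf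
  set c : Finset (ZMod (2*r-1)) := (Finset.range r).image f with hc
  have hfinj : ∀ k1 < r, ∀ k2 < r, f k1 = f k2 → k1 = k2 := by
    intro k1 h1 k2 h2 h
    simp only [hf] at h
    have h3 := add_left_cancel h
    have := zmod_cast_inj (by omega) (by omega) h3
    omega
  have hccard : c.card = r := by
    rw [hc, Finset.card_image_of_injOn, Finset.card_range]
    intro k1 h1 k2 h2 h
    exact hfinj k1 (Finset.mem_range.mp h1) k2 (Finset.mem_range.mp h2) h
  have hadjf : ∀ k1 k2 : ℕ, k1 < k2 → k2 < r →
      (cycleComplement (2*r-1) ⊔ SimpleGraph.fromEdgeSet {s(u, u+1)}).Adj (f k1) (f k2) := by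
    intro k1 k2 hlt hk2
    have hsub : f k2 - f k1 = ((2*k2 - 2*k1 : ℕ) : ZMod (2*r-1)) := by
      simp only [hf]
      push_cast [Nat.cast_sub (by omega : 2*k1 ≤ 2*k2)]
      ring
    by_cases hd : k2 - k1 = r - 1
    · have hk1 : k1 = 0 := by omega
      have hk2' : k2 = r - 1 := by omega
      have hfk2 : f k2 = u := by
        have h1 : ((2*k2 : ℕ) : ZMod (2*r-1)) = -1 := by
          have h2 := zmod_cast_neg_one (m := 2*r-1) (by omega)
          rw [show (2*k2 : ℕ) = 2*r-1-1 by omega]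
          exact h2
        simp only [hf, h1]
        ring
      have hfk1 : f k1 = u + 1 := by simp [hf, hk1]
      rw [hfk1, hfk2, SimpleGraph.sup_adj]
      right
      rw [SimpleGraph.fromEdgeSet_adj, Set.mem_singleton_iff]
      refine ⟨Sym2.eq_swap, fun h => ?_⟩
      exact one_ne_zero (add_eq_left.mp h)
    · rw [SimpleGraph.sup_adj]
      left
      have hd2 : 2 ≤ 2*k2 - 2*k1 := by omega
      have hdlt : 2*k2 - 2*k1 < 2*r-1-1 := by omega
      refine ⟨?_, ?_, ?_⟩
      · intro h
        have h0 : f k2 - f k1 = 0 := by rw [h]; ring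
        rw [hsub] at h0
        have := zmod_cast_inj (by omega) (by omega)
          (h0.trans (by norm_num : ((0:ℕ) : ZMod (2*r-1)) = 0).symm)
        omega
      · intro h
        have h0 : f k2 - f k1 = -1 := by rw [← h]; ring
        rw [hsub] at h0
        have h1 : ((2*k2 - 2*k1 : ℕ) : ZMod (2*r-1)) = ((2*r-1-1 : ℕ) : ZMod (2*r-1)) := by
          rw [h0, zmod_cast_neg_one (by omega)]
        have := zmod_cast_inj (by omega) (by omega) h1
        omega
      · intro h
        rw [hsub] at h
        have h1 : ((2*k2 - 2*k1 : ℕ) : ZMod (2*r-1)) = ((1 : ℕ) : ZMod (2*r-1)) := by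
          rw [h]; norm_num
        have := zmod_cast_inj (by omega) (by omega) h1
        omega
  refine ⟨c, ⟨?_, hccard⟩, ?_⟩
  · intro a ha b hb hab
    obtain ⟨k1, hk1, rfl⟩ := Finset.mem_image.mp (Finset.mem_coe.mp ha)
    obtain ⟨k2, hk2, rfl⟩ := Finset.mem_image.mp (Finset.mem_coe.mp hb)
    rw [Finset.mem_range] at hk1 hk2
    rcases lt_trichotomy k1 k2 with h | h | h
    · exact hadjf k1 k2 h hk2
    · exact absurd (by rw [h]) hab
    · exact (hadjf k2 k1 h hk1).symm
  · -- uniqueness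
    intro s hs
    have hus : u ∈ s ∧ u + 1 ∈ s := by
      by_contra hcon
      refine cc_cliquefree r hr s ⟨?_, hs.2⟩
      intro a ha b hb hab
      rcases (SimpleGraph.sup_adj _ _ _ _).mp (hs.1 ha hb hab) with h | h
      · exact h
      · exfalso
        rw [SimpleGraph.fromEdgeSet_adj, Set.mem_singleton_iff, Sym2.eq_iff] at h
        apply hcon
        rcases h.1 with ⟨h1, h2⟩ | ⟨h1, h2⟩
        · exact ⟨h1 ▸ Finset.mem_coe.mp ha, h2 ▸ Finset.mem_coe.mp hb⟩
        · exact ⟨h2 ▸ Finset.mem_coe.mp hb, h1 ▸ Finset.mem_coe.mp ha⟩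
    obtain ⟨hu, hu1⟩ := hus
    have hpair : ∀ x ∈ s, ∀ y ∈ s, x ≠ y → s(x,y) ≠ s(u, u+1) → x - y ≠ 1 := by
      intro x hx y hy hxy hne
      rcases (SimpleGraph.sup_adj _ _ _ _).mp
          (hs.1 (Finset.mem_coe.mpr hx) (Finset.mem_coe.mpr hy) hxy) with h | h
      · exact h.2.1
      · rw [SimpleGraph.fromEdgeSet_adj, Set.mem_singleton_iff] at h
        exact absurd h.1 hne
    set t := (s.erase u).image (· + 1) with htdef
    have htc : t.card = r - 1 := by
      rw [htdef, Finset.card_image_of_injective _ (add_left_injective 1),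
        Finset.card_erase_of_mem hu, hs.2]
    have hdisj : Disjoint s t := by
      rw [Finset.disjoint_right]
      intro x hxt hxs
      rw [htdef, Finset.mem_image] at hxt
      obtain ⟨y, hy, rfl⟩ := hxt
      have hy' := Finset.mem_of_mem_erase hy
      have hne2 : s(y+1, y) ≠ s(u, u+1) := by
        intro hEq
        rw [Sym2.eq_iff] at hEq
        rcases hEq with ⟨h1, h2⟩ | ⟨h1, h2⟩
        · have h3 : u + 2 = u := by
            calc u + 2 = y + 1 := by rw [h2]; ring
              _ = u := h1
          have h4 : (2 : ZMod (2*r-1)) = 0 := by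
            have h6 : u + (2 : ZMod (2*r-1)) = u + 0 := by
              rw [add_zero]
              exact h3
            exact add_left_cancel h6
          have h5 : ((2:ℕ) : ZMod (2*r-1)) = ((0:ℕ) : ZMod (2*r-1)) := by
            push_cast
            exact h4
          have := zmod_cast_inj (by omega) (by omega) h5
          omega
        · exact (Finset.ne_of_mem_erase hy) h2
      exact hpair (y+1) hxs y hy' (fun h => one_ne_zero (add_eq_left.mp h)) hne2
        (by ring)
    have huniv : s ∪ t = Finset.univ := by
      apply Finset.eq_univ_of_card
      rw [Finset.card_union_of_disjoint hdisj, hs.2, htc, ZMod.card]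
      omega
    have hrel : ∀ x : ZMod (2*r-1), x ≠ u + 1 → (x ∈ s ↔ x - 1 ∉ s) := by
      intro x hx
      constructor
      · intro hxs hx1
        have hx1u : x - 1 ≠ u := fun h => hx (by rw [← h]; ring)
        have hxt : x ∈ t := by
          rw [htdef, Finset.mem_image]
          exact ⟨x - 1, Finset.mem_erase.mpr ⟨hx1u, hx1⟩, by ring⟩
        exact (Finset.disjoint_left.mp hdisj hxs) hxt
      · intro hx1
        have hxu : x ∈ s ∪ t := by rw [huniv]; exact Finset.mem_univ x
        rcases Finset.mem_union.mp hxu with h | h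
        · exact h
        · exfalso
          rw [htdef, Finset.mem_image] at h
          obtain ⟨y, hy, hyx⟩ := h
          have hyy : y = x - 1 := by rw [← hyx]; ring
          exact hx1 (hyy ▸ Finset.mem_of_mem_erase hy)
    have halt : ∀ j : ℕ, j < 2*r-1 → ((u + 1 + (j : ZMod (2*r-1)) ∈ s) ↔ Even j) := by
      intro j
      induction j with
      | zero => intro _; simpa using hu1
      | succ j ih =>
        intro hj
        have hne : u + 1 + ((j+1 : ℕ) : ZMod (2*r-1)) ≠ u + 1 := by
          intro h
          have h2 : ((j+1 : ℕ) : ZMod (2*r-1)) = ((0:ℕ) : ZMod (2*r-1)) := by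
            have h3 : u + 1 + ((j+1 : ℕ) : ZMod (2*r-1))
                = u + 1 + ((0:ℕ) : ZMod (2*r-1)) := by
              rw [Nat.cast_zero, add_zero]
              exact h
            exact add_left_cancel h3
          have := zmod_cast_inj (by omega) (by omega) h2
          omega
        rw [hrel _ hne]
        have hsub : u + 1 + ((j+1 : ℕ) : ZMod (2*r-1)) - 1 = u + 1 + (j : ZMod (2*r-1)) := by
          push_cast
          ring
        rw [hsub, ih (by omega)]
        exact (Nat.even_add_one).symm
    apply Finset.ext
    intro x
    have hx : x = u + 1 + (((x - (u+1)).val : ℕ) : ZMod (2*r-1)) := by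
      rw [ZMod.natCast_rightInverse (x - (u+1))]
      ring
    have hjlt : (x - (u+1)).val < 2*r-1 := ZMod.val_lt _
    rw [hc, Finset.mem_image]
    constructor
    · intro hxs
      have hev : Even ((x - (u+1)).val) := by
        rw [hx] at hxs
        exact (halt _ hjlt).mp hxs
      obtain ⟨k, hk⟩ := hev
      refine ⟨k, Finset.mem_range.mpr (by omega), ?_⟩
      simp only [hf]
      rw [show (2*k : ℕ) = (x - (u+1)).val by omega]
      exact hx.symm
    · rintro ⟨k, hk, rfl⟩
      rw [Finset.mem_range] at hk
      have hxf : f k = u + 1 + ((2*k : ℕ) : ZMod (2*r-1)) := by simp only [hf]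
      have h1 : ((2*k : ℕ) : ZMod (2*r-1)) = (((f k - (u+1)).val : ℕ) : ZMod (2*r-1)) :=
        add_left_cancel (a := u + 1) (hxf.symm.trans hx)
      have h2 := zmod_cast_inj (by omega) (ZMod.val_lt _) h1
      rw [hx]
      exact (halt _ hjlt).mpr ⟨k, by omega⟩

/-- For every `r ≥ 3`, the complement of the cycle `C_{2r-1}` is uniquely
`K_r`-saturated. -/
theorem stmt2 (r : ℕ) (hr : 3 ≤ r) :
    (cycleComplement (2 * r - 1)).UniquelyKSat r := by
  constructor
  · exact cc_cliquefree r hr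
  · intro u v hne hadj
    have h : u - v = 1 ∨ v - u = 1 := by
      by_contra hcon
      push_neg at hcon
      exact hadj ⟨hne, hcon.1, hcon.2⟩
    rcases h with h | h
    · have hv : u = v + 1 := by rw [← h]; ring
      rw [show (s(u,v) : Sym2 (ZMod (2*r-1))) = s(v, v+1) by rw [hv, Sym2.eq_swap]]
      exact cc_key r hr v
    · have hv : v = u + 1 := by rw [← h]; ring
      rw [show (s(u,v) : Sym2 (ZMod (2*r-1))) = s(u, u+1) by rw [hv]]
      exact cc_key r hr u
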